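/- Let x_1 ≤ x_2 ≤ ... ≤ x_d be real numbers and a_1, ..., a_d > 0. Then the Vandermonde mapping V(x_1,...,x_d) = (Σ_i a_i x_i, Σ_i a_i x_i², ..., Σ_i a_i x_i^d), restricted to the prism {x_1 ≤ ... ≤ x_d} ⊂ ℝ^d, is injective: if x_1 ≤ ... ≤ x_d and y_1 ≤ ... ≤ y_d satisfy Σ_i a_i x_i^k = Σ_i a_i y_i^k for k = 1,...,d, then x_i = y_i for all i. -/

import Mathlib

open Finset Polynomial

/-- Arnold's theorem: the Vandermonde mapping
`(x_1,…,x_d) ↦ (Σ a_i x_i, …, Σ a_i x_i^d)` with fixed positive weights `a_i` is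
injective on the prism `x_1 ≤ … ≤ x_d` of `ℝ^d`. -/
theorem vandermonde_map_injective_on_prism (d : ℕ) (a : Fin d → ℝ)
    (ha : ∀ i, 0 < a i) (x y : Fin d → ℝ)
    (hx : Monotone x) (hy : Monotone y)
    (h : ∀ k ∈ Finset.Icc 1 d, ∑ i, a i * x i ^ k = ∑ i, a i * y i ^ k) :
    x = y := by
  classical
  by_contra hne
  rw [funext_iff] at hne
  push_neg at hne
  obtain ⟨i₁, hi₁⟩ := hne
  -- set of indices where x,y differ
  set N : Finset (Fin d) := Finset.univ.filter (fun i => x i ≠ y i) with hNdef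
  have hmemN : ∀ i : Fin d, i ∈ N ↔ x i ≠ y i := by
    intro i; simp [hNdef]
  have hN : N.Nonempty := ⟨i₁, (hmemN i₁).2 hi₁⟩
  set L : Fin d := N.max' hN with hLdef
  have hLN : L ∈ N := N.max'_mem hN
  -- sign of the difference, min and max
  set σ : Fin d → ℝ := fun i => if x i < y i then -1 else 1 with hσdef
  set m : Fin d → ℝ := fun i => min (x i) (y i) with hmdef
  set M : Fin d → ℝ := fun i => max (x i) (y i) with hMdef
  have hmm : Monotone m := fun i j hij => min_le_min (hx hij) (hy hij)
  have hmlM : ∀ i ∈ N, m i < M i := by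
    intro i hi
    rcases lt_or_gt_of_ne ((hmemN i).1 hi) with hlt | hlt
    · simpa [hmdef, hMdef, min_eq_left hlt.le, max_eq_right hlt.le] using hlt
    · simpa [hmdef, hMdef, min_eq_right hlt.le, max_eq_left hlt.le] using hlt
  -- flip points
  set F : Finset (Fin d) :=
    N.filter (fun j => ∃ i ∈ N, i < j ∧ (∀ k ∈ N, i < k → ¬ k < j) ∧
      (x i < y i ↔ ¬ (x j < y j))) with hFdef
  have hFN : F ⊆ N := Finset.filter_subset _ _
  -- the unique previous-nonzero characterization
  have hprev : ∀ j ∈ F, ∀ i ∈ N, i < j → (∀ k ∈ N, i < k → ¬ k < j) →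
      (x i < y i ↔ ¬ (x j < y j)) := by
    intro j hj i hi hij hbetween
    rw [hFdef, Finset.mem_filter] at hj
    obtain ⟨i₀, hi₀, hi₀j, hbet₀, hsign₀⟩ := hj.2
    have : i₀ = i := by
      rcases lt_trichotomy i₀ i with hc | hc | hc
      · exact absurd hij (hbet₀ i hi hc)
      · exact hc
      · exact absurd hi₀j (hbetween i₀ hi₀ hc)
    rwa [this] at hsign₀
  -- weaker: every j ∈ F has some previous witness ≥ any given earlier index
  have hwitness : ∀ j ∈ F, ∀ i ∈ N, i < j →
      ∃ i₀ ∈ N, i ≤ i₀ ∧ i₀ < j ∧ (x i₀ < y i₀ ↔ ¬ (x j < y j)) := by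
    intro j hj i hi hij
    rw [hFdef, Finset.mem_filter] at hj
    obtain ⟨i₀, hi₀, hi₀j, hbet₀, hsign₀⟩ := hj.2
    refine ⟨i₀, hi₀, ?_, hi₀j, hsign₀⟩
    by_contra hc
    push_neg at hc
    exact (hbet₀ i hi hc) hij
  -- separation: flip points at index > i lie to the right of the interval of i
  have hsep : ∀ i ∈ N, ∀ j ∈ F, i < j → M i ≤ m j := by
    intro i hi j hj hij
    have hjN : j ∈ N := hFN hj
    obtain ⟨i₀, hi₀N, hii₀, hi₀j, hsign⟩ := hwitness j hj i hi hij
    have hxij : x i ≤ x j := hx hij.le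
    have hyij : y i ≤ y j := hy hij.le
    rcases lt_or_gt_of_ne ((hmemN j).1 hjN) with hj2 | hj2
    · -- x j < y j : m j = x j
      have hmj : m j = x j := min_eq_left hj2.le
      rw [hmj]
      -- i₀ has opposite sign to j : ¬(x i₀ < y i₀), i.e. y i₀ < x i₀
      have hi₀sign : y i₀ < x i₀ := by
        have h1 : ¬ x i₀ < y i₀ := fun hh => (hsign.mp hh) hj2
        exact lt_of_le_of_ne (not_lt.mp h1) (Ne.symm ((hmemN i₀).1 hi₀N))
      rw [hMdef]
      simp only [max_le_iff]
      constructor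
      · exact hxij
      · rcases lt_or_gt_of_ne ((hmemN i).1 hi) with hi2 | hi2
        · -- x i < y i, same sign as j, so i < i₀
          have hine : i ≠ i₀ := by
            intro hEq; rw [hEq] at hi2; exact absurd hi2 (asymm hi₀sign)
          have hii₀' : i < i₀ := lt_of_le_of_ne hii₀ hine
          have hgoal : y i < x j := calc
            y i ≤ y i₀ := hy hii₀'.le
            _ < x i₀ := hi₀sign
            _ ≤ x j := hx hi₀j.le
          exact hgoal.le
        · exact le_trans hi2.le hxij
    · -- y j < x j : m j = y j
      have hmj : m j = y j := min_eq_right hj2.le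
      rw [hmj]
      have hi₀sign : x i₀ < y i₀ := hsign.mpr (by simpa using asymm hj2)
      rw [hMdef]
      simp only [max_le_iff]
      refine ⟨?_, hyij⟩
      rcases lt_or_gt_of_ne ((hmemN i).1 hi) with hi2 | hi2
      · exact le_trans hi2.le hyij
      · have hine : i ≠ i₀ := by
          intro hEq; rw [hEq] at hi2; exact absurd hi2 (asymm hi₀sign)
        have hii₀' : i < i₀ := lt_of_le_of_ne hii₀ hine
        have hgoal : x i < y j := calc
          x i ≤ x i₀ := hx hii₀'.le
          _ < y i₀ := hi₀sign
          _ ≤ y j := hy hi₀j.le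
        exact hgoal.le
  -- parity claim
  have hσval : ∀ i, σ i = -1 ∨ σ i = 1 := by
    intro i; rw [hσdef]; by_cases hc : x i < y i <;> simp [hc]
  have hparity : ∀ i ∈ N, σ i * (-1 : ℝ) ^ (F.filter (fun j => i < j)).card = σ L := by
    have key : ∀ n : ℕ, ∀ i ∈ N, (N.filter (fun k => i < k)).card = n →
        σ i * (-1 : ℝ) ^ (F.filter (fun j => i < j)).card = σ L := by
      intro n
      induction n using Nat.strong_induction_on with
      | _ n ih =>
        intro i hi hcard
        by_cases hiL : i = L
        · have hFi : F.filter (fun j => i < j) = ∅ := by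
            rw [Finset.eq_empty_iff_forall_notMem]
            intro j hj
            rw [Finset.mem_filter] at hj
            have : j ≤ L := N.le_max' j (hFN hj.1)
            rw [hiL] at hj
            exact absurd hj.2 (not_lt.mpr this)
          rw [hFi, hiL]; simp
        · -- there is a next element of N after i
          have hiL' : i < L := lt_of_le_of_ne (N.le_max' i hi) hiL
          have hne' : (N.filter (fun k => i < k)).Nonempty := ⟨L, by
            rw [Finset.mem_filter]; exact ⟨hLN, hiL'⟩⟩
          set i' : Fin d := (N.filter (fun k => i < k)).min' hne' with hi'def
          have hi'mem := (N.filter (fun k => i < k)).min'_mem hne'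
          rw [Finset.mem_filter] at hi'mem
          obtain ⟨hi'N, hii'⟩ := hi'mem
          have hbet : ∀ k ∈ N, i < k → ¬ k < i' := by
            intro k hk hik hki'
            have : i' ≤ k := Finset.min'_le _ k (by rw [Finset.mem_filter]; exact ⟨hk, hik⟩)
            exact absurd hki' (not_lt.mpr this)
          -- cardinality decreases
          have hsub : (N.filter (fun k => i' < k)) ⊂ (N.filter (fun k => i < k)) := by
            constructor
            · intro k hk
              rw [Finset.mem_filter] at hk ⊢
              exact ⟨hk.1, hii'.trans hk.2⟩
            · intro hsub'
              have : i' ∈ N.filter (fun k => i' < k) := hsub' (by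
                rw [Finset.mem_filter]; exact ⟨hi'N, hii'⟩)
              rw [Finset.mem_filter] at this
              exact lt_irrefl i' this.2
          have hlt : (N.filter (fun k => i' < k)).card < n := by
            rw [← hcard]; exact Finset.card_lt_card hsub
          have ih' := ih _ hlt i' hi'N rfl
          -- split the flip set
          have hFsplit : F.filter (fun j => i < j) =
              (if i' ∈ F then {i'} else ∅) ∪ F.filter (fun j => i' < j) := by
            ext j
            simp only [Finset.mem_filter, Finset.mem_union]
            constructor
            · rintro ⟨hjF, hij⟩
              rcases lt_or_ge i' j with hc | hc
              · exact Or.inr ⟨hjF, hc⟩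
              · have : i' ≤ j := by
                  by_contra hc2
                  push_neg at hc2
                  exact (hbet j (hFN hjF) hij) hc2
                have hji' : j = i' := le_antisymm hc this
                subst hji'
                simp [hjF]
            · rintro (hc | ⟨hjF, hij⟩)
              · split_ifs at hc with hi'F
                · rw [Finset.mem_singleton] at hc; subst hc; exact ⟨hi'F, hii'⟩
                · simp at hc
              · exact ⟨hjF, hii'.trans hij⟩
          have hdisj : Disjoint (if i' ∈ F then ({i'} : Finset (Fin d)) else ∅)
              (F.filter (fun j => i' < j)) := by
            split_ifs with hi'F
            · rw [Finset.disjoint_singleton_left, Finset.mem_filter]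
              rintro ⟨-, hc⟩; exact lt_irrefl i' hc
            · exact Finset.disjoint_empty_left _
          have hcardsplit : (F.filter (fun j => i < j)).card =
              (if i' ∈ F then 1 else 0) + (F.filter (fun j => i' < j)).card := by
            rw [hFsplit, Finset.card_union_of_disjoint hdisj]
            split_ifs <;> simp
          -- sign relation between i and i'
          have hsignrel : σ i * (-1 : ℝ) ^ (if i' ∈ F then 1 else 0) = σ i' := by
            by_cases hi'F : i' ∈ F
            · -- flip: signs are opposite
              have hopp := hprev i' hi'F i hi hii' hbet
              simp only [hi'F, if_true, pow_one]
              rw [hσdef]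
              by_cases hc : x i < y i
              · have : ¬ x i' < y i' := by tauto
                simp [hc, this]
              · have : x i' < y i' := by tauto
                simp [hc, this]
            · -- no flip: signs are equal
              have hsame : ¬ (x i < y i ↔ ¬ (x i' < y i')) := by
                intro hc
                rw [hFdef, Finset.mem_filter] at hi'F
                exact hi'F ⟨hi'N, i, hi, hii', hbet, hc⟩
              simp only [hi'F, if_false, pow_zero, mul_one]
              rw [hσdef]
              rcases lt_or_gt_of_ne ((hmemN i).1 hi) with hc | hc <;>
                rcases lt_or_gt_of_ne ((hmemN i').1 hi'N) with hc' | hc'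
              · simp [hc, hc']
              · exact absurd (iff_of_true hc (asymm hc')) hsame
              · exact absurd (iff_of_false (asymm hc) (not_not_intro hc')) hsame
              · simp [not_lt_of_gt hc, not_lt_of_gt hc']
          rw [hcardsplit, pow_add, ← mul_assoc, hsignrel, ih']
    intro i hi
    exact key _ i hi rfl
  -- the polynomial and its antiderivative
  set Q : Polynomial ℝ := Polynomial.C (σ L) * ∏ j ∈ F, (Polynomial.X - Polynomial.C (m j))
    with hQdef
  have hd1 : 1 ≤ d := by
    rcases Nat.eq_zero_or_pos d with h0 | h1
    · exact absurd i₁.2 (by omega)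
    · exact h1
  have hdegQ : Q.natDegree < d := by
    have h1 : F ⊂ N := by
      constructor
      · exact hFN
      · intro hsub
        -- N.min' would be in F, but its witness is smaller, contradiction
        have hminF : N.min' hN ∈ F := hsub (N.min'_mem hN)
        rw [hFdef, Finset.mem_filter] at hminF
        obtain ⟨-, i₀, hi₀, hlt, -, -⟩ := hminF
        exact absurd hlt (not_lt.mpr (N.min'_le i₀ hi₀))
    have hcardF : F.card < N.card := Finset.card_lt_card h1
    have hcardN : N.card ≤ d := by
      have := Finset.card_le_card (Finset.filter_subset (fun i => x i ≠ y i) Finset.univ)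
      simpa [hNdef] using this
    calc Q.natDegree ≤ (Polynomial.C (σ L)).natDegree +
          (∏ j ∈ F, (Polynomial.X - Polynomial.C (m j))).natDegree :=
        Polynomial.natDegree_mul_le
      _ ≤ 0 + ∑ j ∈ F, (Polynomial.X - Polynomial.C (m j)).natDegree := by
        rw [Polynomial.natDegree_C]
        exact Nat.add_le_add_left (Polynomial.natDegree_prod_le _ _) 0
      _ ≤ ∑ j ∈ F, 1 := by
        rw [Nat.zero_add]
        exact Finset.sum_le_sum (fun j _ => Polynomial.natDegree_X_sub_C_le _)
      _ = F.card := by simp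
      _ < d := lt_of_lt_of_le hcardF hcardN
  set p : ℝ → ℝ := fun t => ∑ k ∈ Finset.range d, Q.coeff k / (k + 1) * t ^ (k + 1)
    with hpdef
  -- derivative of p is Q.eval
  have hderiv : ∀ t : ℝ, HasDerivAt p (Q.eval t) t := by
    intro t
    have h1 : HasDerivAt p (∑ k ∈ Finset.range d,
        Q.coeff k / (k + 1) * ((k + 1) * t ^ k)) t := by
      apply HasDerivAt.fun_sum
      intro k _
      have := (hasDerivAt_pow (k + 1) t).const_mul (Q.coeff k / (k + 1))
      simpa using this
    have h2 : (∑ k ∈ Finset.range d, Q.coeff k / (k + 1) * ((k + 1) * t ^ k)) = Q.eval t := by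
      rw [Polynomial.eval_eq_sum_range' hdegQ]
      apply Finset.sum_congr rfl
      intro k _
      have hk : ((k : ℝ) + 1) ≠ 0 := by positivity
      field_simp
    rwa [h2] at h1
  have hcont : Continuous p := by
    apply continuous_finset_sum
    intro k _
    exact continuous_const.mul (continuous_pow (k + 1))
  -- sign of Q.eval on the interval of each i ∈ N
  have hsign : ∀ i ∈ N, ∀ t ∈ Set.Ioo (m i) (M i), 0 < σ i * Q.eval t := by
    intro i hi t ht
    have heval : Q.eval t = σ L * ∏ j ∈ F, (t - m j) := by
      simp [hQdef, Polynomial.eval_prod]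
    set c : ℕ := (F.filter (fun j => i < j)).card with hcdef
    have hsplit : ∏ j ∈ F, (t - m j) =
        (∏ j ∈ F.filter (fun j => ¬ i < j), (t - m j)) *
        (∏ j ∈ F.filter (fun j => i < j), (t - m j)) := by
      rw [← Finset.prod_filter_mul_prod_filter_not F (fun j => i < j) (fun j => t - m j)]
      exact mul_comm _ _
    have hpos1 : 0 < ∏ j ∈ F.filter (fun j => ¬ i < j), (t - m j) := by
      apply Finset.prod_pos
      intro j hj
      rw [Finset.mem_filter] at hj
      have hji : j ≤ i := not_lt.mp hj.2
      have : m j ≤ m i := hmm hji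
      linarith [ht.1]
    have hneg : ∏ j ∈ F.filter (fun j => i < j), (t - m j) =
        (-1 : ℝ) ^ c * ∏ j ∈ F.filter (fun j => i < j), (m j - t) := by
      rw [← Finset.prod_const, ← Finset.prod_mul_distrib]
      apply Finset.prod_congr rfl
      intro j _
      ring
    have hpos2 : 0 < ∏ j ∈ F.filter (fun j => i < j), (m j - t) := by
      apply Finset.prod_pos
      intro j hj
      rw [Finset.mem_filter] at hj
      have := hsep i hi j hj.1 hj.2
      linarith [ht.2]
    rw [heval, hsplit, hneg]
    have hkey := hparity i hi
    have hσL2 : σ L * σ L = 1 := by rcases hσval L with h' | h' <;> rw [h'] <;> ring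
    have : σ i * (σ L * ((∏ j ∈ F.filter (fun j => ¬ i < j), (t - m j)) *
        ((-1 : ℝ) ^ c * ∏ j ∈ F.filter (fun j => i < j), (m j - t)))) =
        (σ i * (-1 : ℝ) ^ c) * σ L * ((∏ j ∈ F.filter (fun j => ¬ i < j), (t - m j)) *
        (∏ j ∈ F.filter (fun j => i < j), (m j - t))) := by ring
    rw [this, hkey, hσL2]
    rw [one_mul]
    exact mul_pos hpos1 hpos2
  -- p (y i) ≤ p (x i) for all i, strict on N
  have hmono : ∀ i : Fin d, p (y i) ≤ p (x i) ∧ (i ∈ N → p (y i) < p (x i)) := by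
    intro i
    by_cases hiN : i ∈ N
    · have hlt := hmlM i hiN
      rcases lt_or_gt_of_ne ((hmemN i).1 hiN) with hc | hc
      · -- x i < y i : σ i = -1, Q.eval < 0 on (x i, y i), p strictly decreasing
        have hm : m i = x i := min_eq_left hc.le
        have hM : M i = y i := max_eq_right hc.le
        have hanti : StrictAntiOn p (Set.Icc (m i) (M i)) := by
          apply strictAntiOn_of_deriv_neg (convex_Icc _ _) hcont.continuousOn
          intro t ht
          rw [interior_Icc] at ht
          have := hsign i hiN t ht
          have hσi : σ i = -1 := by rw [hσdef]; simp [hc]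
          rw [(hderiv t).deriv]
          rw [hσi] at this
          linarith
        have := hanti (Set.mem_Icc.mpr ⟨min_le_left _ _, le_max_left _ _⟩)
          (Set.mem_Icc.mpr ⟨min_le_right _ _, le_max_right _ _⟩) hc
        exact ⟨this.le, fun _ => this⟩
      · have hm : m i = y i := min_eq_right hc.le
        have hM : M i = x i := max_eq_left hc.le
        have hmono' : StrictMonoOn p (Set.Icc (m i) (M i)) := by
          apply strictMonoOn_of_deriv_pos (convex_Icc _ _) hcont.continuousOn
          intro t ht
          rw [interior_Icc] at ht
          have := hsign i hiN t ht
          have hσi : σ i = 1 := by rw [hσdef]; simp [not_lt_of_gt hc]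
          rw [(hderiv t).deriv]
          rw [hσi] at this
          linarith
        have := hmono' (Set.mem_Icc.mpr ⟨min_le_right _ _, le_max_right _ _⟩)
          (Set.mem_Icc.mpr ⟨min_le_left _ _, le_max_left _ _⟩) hc
        exact ⟨this.le, fun _ => this⟩
    · have : x i = y i := by
        by_contra hc
        exact hiN ((hmemN i).2 hc)
      rw [this]
      exact ⟨le_refl _, fun hc => absurd hc hiN⟩
  -- the moment identity
  have hmom : ∀ z : Fin d → ℝ, ∑ i, a i * p (z i) =
      ∑ k ∈ Finset.range d, Q.coeff k / (k + 1) * ∑ i, a i * z i ^ (k + 1) := by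
    intro z
    simp only [hpdef, Finset.mul_sum]
    rw [Finset.sum_comm]
    apply Finset.sum_congr rfl
    intro k _
    apply Finset.sum_congr rfl
    intro i _
    ring
  have heqmom : ∑ i, a i * p (x i) = ∑ i, a i * p (y i) := by
    rw [hmom x, hmom y]
    apply Finset.sum_congr rfl
    intro k hk
    rw [Finset.mem_range] at hk
    rw [h (k + 1) (Finset.mem_Icc.mpr ⟨Nat.le_add_left 1 k, by omega⟩)]
  -- contradiction
  have hlt : ∑ i, a i * p (y i) < ∑ i, a i * p (x i) := by
    apply Finset.sum_lt_sum
    · intro i _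
      exact mul_le_mul_of_nonneg_left (hmono i).1 (ha i).le
    · refine ⟨i₁, Finset.mem_univ i₁, ?_⟩
      exact mul_lt_mul_of_pos_left ((hmono i₁).2 ((hmemN i₁).2 hi₁)) (ha i₁)
  rw [heqmom] at hlt
  exact lt_irrefl _ hlt
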